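/- Suppose the weighted undirected graph a on n nodes is connected. A tuple (X*, Y*, Z*, U*, W*) is an optimal solution of problem (CRR-opt) if and only if there exist Λ¹_i* ∈ ℝ^{m×q} and Λ²_i* ∈ ℝ^{r×q} (i = 1,…,n) such that (X*, Y*, Z*, U*, W*, Λ¹*, Λ²*) is an equilibrium of algorithm (CRR-alg), i.e., all the right-hand sides of (CRR-alg) vanish at this point (with all derivative-feedback terms set to zero). -/

import Mathlib

open Matrix

/-- Squared Frobenius norm of a real matrix: `‖M‖_F² = tr (Mᵀ M)`. -/
noncomputable def frobSq {α β : Type*} [Fintype α] [Fintype β] (M : Matrix α β ℝ) : ℝ :=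
  Matrix.trace (Mᵀ * M)

/-- Frobenius inner product of real matrices: `⟨M,N⟩_F = tr (Mᵀ N)`. -/
noncomputable def frobInner {α β : Type*} [Fintype α] [Fintype β] (M N : Matrix α β ℝ) : ℝ :=
  Matrix.trace (Mᵀ * N)

/-- The weighted undirected graph with adjacency matrix `a` is connected: any two nodes are
joined by a path of adjacent nodes (nodes `u ≠ v` are adjacent iff `a u v > 0`). -/
def GraphConnected {n : ℕ} (a : Matrix (Fin n) (Fin n) ℝ) : Prop :=
  ∀ i j : Fin n, Relation.ReflTransGen (fun u v : Fin n => u ≠ v ∧ 0 < a u v) i j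

/-- Assemble a family of row blocks `M i ∈ ℝ^{d i × β}` into one matrix. -/
def blockRows {n : ℕ} {d : Fin n → ℕ} {β : Type*} (M : ∀ i, Matrix (Fin (d i)) β ℝ) :
    Matrix ((i : Fin n) × Fin (d i)) β ℝ :=
  Matrix.of fun s j => M s.1 s.2 j

/-- Assemble a family of column blocks `M i ∈ ℝ^{α × d i}` into one matrix. -/
def blockCols {n : ℕ} {d : Fin n → ℕ} {α : Type*} (M : ∀ i, Matrix α (Fin (d i)) ℝ) :
    Matrix α ((i : Fin n) × Fin (d i)) ℝ :=
  Matrix.of fun k s => M s.1 k s.2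

/-- The `i`-th row block of a matrix whose rows are partitioned according to `d`. -/
def rowBlk {n : ℕ} {d : Fin n → ℕ} {β : Type*}
    (Y : Matrix ((i : Fin n) × Fin (d i)) β ℝ) (i : Fin n) :
    Matrix (Fin (d i)) β ℝ :=
  Matrix.of fun k j => Y ⟨i, k⟩ j

/-- `[M]_R`: the matrix whose `i`-th row block is `M` and whose other row blocks are zero. -/
def embedRow {n : ℕ} {d : Fin n → ℕ} {β : Type*} (i : Fin n)
    (M : Matrix (Fin (d i)) β ℝ) :
    Matrix ((i' : Fin n) × Fin (d i')) β ℝ :=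
  Matrix.of fun s j => if h : s.1 = i then M (Fin.cast (congrArg d h) s.2) j else 0

/-- `[M]_C`: the matrix whose `i`-th column block is `M` and whose other column blocks are zero. -/
def embedCol {n : ℕ} {d : Fin n → ℕ} {α : Type*} (i : Fin n)
    (M : Matrix α (Fin (d i)) ℝ) :
    Matrix α ((i' : Fin n) × Fin (d i')) ℝ :=
  Matrix.of fun k s => if h : s.1 = i then M k (Fin.cast (congrArg d h) s.2) else 0

/-- Feasibility for problem (CRR-opt). -/
def CRRfeas {n q : ℕ} {rdim mdim pdim : Fin n → ℕ}
    (a : Matrix (Fin n) (Fin n) ℝ)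
    (Bv : ∀ i, Matrix (Fin (pdim i)) (Fin q) ℝ)
    (Xl : ∀ i, Matrix ((i' : Fin n) × Fin (rdim i')) (Fin (pdim i)) ℝ)
    (Yv : ∀ i, Matrix (Fin (rdim i)) (Fin q) ℝ)
    (Z : Fin n → Matrix ((i : Fin n) × Fin (rdim i)) (Fin q) ℝ)
    (U W : Fin n → Matrix ((i : Fin n) × Fin (mdim i)) (Fin q) ℝ) : Prop :=
  (∀ i, embedRow i (Yv i) - Xl i * Bv i - ∑ j, a i j • (Z i - Z j) = 0) ∧
  (∀ i, U i = ∑ j, a i j • (W i - W j))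

/-- Objective of problem (CRR-opt): `Σ_i ‖A_{li} Y_{vi} − [F_{vi}]_R − U_i‖_F²`. -/
noncomputable def CRRobj {n q : ℕ} {rdim mdim : Fin n → ℕ}
    (Al : ∀ i, Matrix ((i' : Fin n) × Fin (mdim i')) (Fin (rdim i)) ℝ)
    (Fv : ∀ i, Matrix (Fin (mdim i)) (Fin q) ℝ)
    (Yv : ∀ i, Matrix (Fin (rdim i)) (Fin q) ℝ)
    (U : Fin n → Matrix ((i : Fin n) × Fin (mdim i)) (Fin q) ℝ) : ℝ :=
  ∑ i, frobSq (Al i * Yv i - embedRow i (Fv i) - U i)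

/-- Right-hand side of the `X_{li}`-equation in algorithm (CRR-alg). -/
noncomputable def CRRrhsX {n q : ℕ} {rdim pdim : Fin n → ℕ}
    (Bv : ∀ i, Matrix (Fin (pdim i)) (Fin q) ℝ)
    (L2 : Fin n → Matrix ((i : Fin n) × Fin (rdim i)) (Fin q) ℝ) (i : Fin n) :
    Matrix ((i' : Fin n) × Fin (rdim i')) (Fin (pdim i)) ℝ :=
  L2 i * (Bv i)ᵀ

/-- Right-hand side of the `Y_{vi}`-equation in algorithm (CRR-alg). -/
noncomputable def CRRrhsY {n q : ℕ} {rdim mdim : Fin n → ℕ}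
    (Al : ∀ i, Matrix ((i' : Fin n) × Fin (mdim i')) (Fin (rdim i)) ℝ)
    (Fv : ∀ i, Matrix (Fin (mdim i)) (Fin q) ℝ)
    (Yv : ∀ i, Matrix (Fin (rdim i)) (Fin q) ℝ)
    (U : Fin n → Matrix ((i : Fin n) × Fin (mdim i)) (Fin q) ℝ)
    (L2 : Fin n → Matrix ((i : Fin n) × Fin (rdim i)) (Fin q) ℝ) (i : Fin n) :
    Matrix (Fin (rdim i)) (Fin q) ℝ :=
  -((Al i)ᵀ * (Al i * Yv i - embedRow i (Fv i) - U i)) - rowBlk (L2 i) i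

/-- Right-hand side of the `U_i`-equation in algorithm (CRR-alg). -/
noncomputable def CRRrhsU {n q : ℕ} {rdim mdim : Fin n → ℕ}
    (Al : ∀ i, Matrix ((i' : Fin n) × Fin (mdim i')) (Fin (rdim i)) ℝ)
    (Fv : ∀ i, Matrix (Fin (mdim i)) (Fin q) ℝ)
    (Yv : ∀ i, Matrix (Fin (rdim i)) (Fin q) ℝ)
    (U L1 : Fin n → Matrix ((i : Fin n) × Fin (mdim i)) (Fin q) ℝ) (i : Fin n) :
    Matrix ((i : Fin n) × Fin (mdim i)) (Fin q) ℝ :=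
  Al i * Yv i - embedRow i (Fv i) - U i - L1 i

/-- Right-hand side of the `W_i`-equation in algorithm (CRR-alg). -/
noncomputable def CRRrhsW {n q : ℕ} {mdim : Fin n → ℕ}
    (a : Matrix (Fin n) (Fin n) ℝ)
    (L1 : Fin n → Matrix ((i : Fin n) × Fin (mdim i)) (Fin q) ℝ) (i : Fin n) :
    Matrix ((i : Fin n) × Fin (mdim i)) (Fin q) ℝ :=
  ∑ j, a i j • (L1 i - L1 j)

/-- Right-hand side of the `Z_i`-equation in algorithm (CRR-alg). -/
noncomputable def CRRrhsZ {n q : ℕ} {rdim : Fin n → ℕ}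
    (a : Matrix (Fin n) (Fin n) ℝ)
    (L2 : Fin n → Matrix ((i : Fin n) × Fin (rdim i)) (Fin q) ℝ) (i : Fin n) :
    Matrix ((i : Fin n) × Fin (rdim i)) (Fin q) ℝ :=
  ∑ j, a i j • (L2 i - L2 j)

/-- Right-hand side of the `Λ¹_i`-equation in algorithm (CRR-alg), with the derivative
feedback replaced by the right-hand side that determines it. -/
noncomputable def CRRrhsL1 {n q : ℕ} {rdim mdim : Fin n → ℕ}
    (a : Matrix (Fin n) (Fin n) ℝ)
    (Al : ∀ i, Matrix ((i' : Fin n) × Fin (mdim i')) (Fin (rdim i)) ℝ)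
    (Fv : ∀ i, Matrix (Fin (mdim i)) (Fin q) ℝ)
    (Yv : ∀ i, Matrix (Fin (rdim i)) (Fin q) ℝ)
    (U W L1 : Fin n → Matrix ((i : Fin n) × Fin (mdim i)) (Fin q) ℝ) (i : Fin n) :
    Matrix ((i : Fin n) × Fin (mdim i)) (Fin q) ℝ :=
  U i + CRRrhsU Al Fv Yv U L1 i - ∑ j, a i j • (W i - W j) - ∑ j, a i j • (L1 i - L1 j)

/-- Right-hand side of the `Λ²_i`-equation in algorithm (CRR-alg), with the derivative
feedbacks replaced by the right-hand sides that determine them. -/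
noncomputable def CRRrhsL2 {n q : ℕ} {rdim mdim pdim : Fin n → ℕ}
    (a : Matrix (Fin n) (Fin n) ℝ)
    (Al : ∀ i, Matrix ((i' : Fin n) × Fin (mdim i')) (Fin (rdim i)) ℝ)
    (Bv : ∀ i, Matrix (Fin (pdim i)) (Fin q) ℝ)
    (Fv : ∀ i, Matrix (Fin (mdim i)) (Fin q) ℝ)
    (Xl : ∀ i, Matrix ((i' : Fin n) × Fin (rdim i')) (Fin (pdim i)) ℝ)
    (Yv : ∀ i, Matrix (Fin (rdim i)) (Fin q) ℝ)
    (Z : Fin n → Matrix ((i : Fin n) × Fin (rdim i)) (Fin q) ℝ)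
    (U : Fin n → Matrix ((i : Fin n) × Fin (mdim i)) (Fin q) ℝ)
    (L2 : Fin n → Matrix ((i : Fin n) × Fin (rdim i)) (Fin q) ℝ) (i : Fin n) :
    Matrix ((i : Fin n) × Fin (rdim i)) (Fin q) ℝ :=
  embedRow i (Yv i) + embedRow i (CRRrhsY Al Fv Yv U L2 i) - Xl i * Bv i
    - ∑ j, a i j • (Z i - Z j) - ∑ j, a i j • (L2 i - L2 j)
    - CRRrhsX Bv L2 i * Bv i

/-- Equilibrium of algorithm (CRR-alg): all right-hand sides vanish. -/
noncomputable def CRRequil {n q : ℕ} {rdim mdim pdim : Fin n → ℕ}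
    (a : Matrix (Fin n) (Fin n) ℝ)
    (Al : ∀ i, Matrix ((i' : Fin n) × Fin (mdim i')) (Fin (rdim i)) ℝ)
    (Bv : ∀ i, Matrix (Fin (pdim i)) (Fin q) ℝ)
    (Fv : ∀ i, Matrix (Fin (mdim i)) (Fin q) ℝ)
    (Xl : ∀ i, Matrix ((i' : Fin n) × Fin (rdim i')) (Fin (pdim i)) ℝ)
    (Yv : ∀ i, Matrix (Fin (rdim i)) (Fin q) ℝ)
    (Z : Fin n → Matrix ((i : Fin n) × Fin (rdim i)) (Fin q) ℝ)
    (U W L1 : Fin n → Matrix ((i : Fin n) × Fin (mdim i)) (Fin q) ℝ)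
    (L2 : Fin n → Matrix ((i : Fin n) × Fin (rdim i)) (Fin q) ℝ) : Prop :=
  ∀ i, CRRrhsX Bv L2 i = 0 ∧ CRRrhsY Al Fv Yv U L2 i = 0 ∧
    CRRrhsU Al Fv Yv U L1 i = 0 ∧ CRRrhsW a L1 i = 0 ∧ CRRrhsZ a L2 i = 0 ∧
    CRRrhsL1 a Al Fv Yv U W L1 i = 0 ∧ CRRrhsL2 a Al Bv Fv Xl Yv Z U L2 i = 0


set_option linter.unusedSectionVars false

section Frob
variable {α β γ : Type*} [Fintype α] [Fintype β] [Fintype γ]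

lemma frobInner_eq_sum (M N : Matrix α β ℝ) : frobInner M N = ∑ i, ∑ j, M i j * N i j := by
  unfold frobInner Matrix.trace
  simp only [Matrix.diag, Matrix.mul_apply, Matrix.transpose_apply]
  exact Finset.sum_comm

lemma frobSq_eq (M : Matrix α β ℝ) : frobSq M = frobInner M M := rfl

lemma frobInner_comm (M N : Matrix α β ℝ) : frobInner M N = frobInner N M := by
  simp only [frobInner_eq_sum, mul_comm]

lemma frobSq_nonneg (M : Matrix α β ℝ) : 0 ≤ frobSq M := by
  rw [frobSq_eq, frobInner_eq_sum]
  exact Finset.sum_nonneg fun _ _ => Finset.sum_nonneg fun _ _ => mul_self_nonneg _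

lemma eq_zero_of_frobSq (M : Matrix α β ℝ) (h : frobSq M = 0) : M = 0 := by
  rw [frobSq_eq, frobInner_eq_sum] at h
  ext i j
  have h1 : ∀ i ∈ Finset.univ, (0:ℝ) ≤ ∑ j, M i j * M i j := by
    intro i _; exact Finset.sum_nonneg fun _ _ => mul_self_nonneg _
  have := (Finset.sum_eq_zero_iff_of_nonneg h1).mp h i (Finset.mem_univ i)
  have h2 : ∀ j ∈ Finset.univ, (0:ℝ) ≤ M i j * M i j := by
    intro j _; exact mul_self_nonneg _
  have := (Finset.sum_eq_zero_iff_of_nonneg h2).mp this j (Finset.mem_univ j)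
  have := mul_self_eq_zero.mp this
  simpa using this

lemma frobInner_add_right (M N P : Matrix α β ℝ) :
    frobInner M (N + P) = frobInner M N + frobInner M P := by
  simp [frobInner_eq_sum, Matrix.add_apply, mul_add, Finset.sum_add_distrib]

lemma frobInner_sub_right (M N P : Matrix α β ℝ) :
    frobInner M (N - P) = frobInner M N - frobInner M P := by
  simp [frobInner_eq_sum, Matrix.sub_apply, mul_sub, Finset.sum_sub_distrib]

lemma frobInner_smul_right (t : ℝ) (M N : Matrix α β ℝ) :
    frobInner M (t • N) = t * frobInner M N := by
  simp [frobInner_eq_sum, Matrix.smul_apply, Finset.mul_sum]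
  ring_nf
  congr 1; ext i; congr 1; ext j; ring

lemma frobInner_zero_right (M : Matrix α β ℝ) : frobInner M (0 : Matrix α β ℝ) = 0 := by
  simp [frobInner_eq_sum]

lemma frobInner_sum_right {ι : Type*} (s : Finset ι) (M : Matrix α β ℝ)
    (f : ι → Matrix α β ℝ) : frobInner M (∑ k ∈ s, f k) = ∑ k ∈ s, frobInner M (f k) := by
  classical
  induction s using Finset.induction_on with
  | empty => simp [frobInner_zero_right]
  | insert a s' h ih => simp [Finset.sum_insert h, frobInner_add_right, ih]

lemma frobSq_add_smul (t : ℝ) (M N : Matrix α β ℝ) :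
    frobSq (M + t • N) = frobSq M + 2 * frobInner M N * t + frobSq N * t ^ 2 := by
  simp only [frobSq_eq, frobInner_eq_sum, Matrix.add_apply, Matrix.smul_apply, smul_eq_mul]
  have key : ∀ i j, (M i j + t * N i j) * (M i j + t * N i j)
      = M i j * M i j + (M i j * N i j) * (2 * t) + (N i j * N i j) * t ^ 2 := by
    intro i j; ring
  simp_rw [key, Finset.sum_add_distrib, ← Finset.sum_mul]
  ring

lemma frobInner_mul_right_trans (M : Matrix α β ℝ) (G : Matrix α γ ℝ) (B : Matrix γ β ℝ) :
    frobInner M (G * B) = frobInner (M * Bᵀ) G := by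
  unfold frobInner
  rw [Matrix.transpose_mul, Matrix.transpose_transpose, ← Matrix.mul_assoc,
    Matrix.trace_mul_cycle]

lemma frobInner_mul_left (A : Matrix α γ ℝ) (Y : Matrix γ β ℝ) (N : Matrix α β ℝ) :
    frobInner (A * Y) N = frobInner Y (Aᵀ * N) := by
  unfold frobInner
  rw [Matrix.transpose_mul, Matrix.mul_assoc]

end Frob

section Blocks
variable {n : ℕ} {d : Fin n → ℕ} {β : Type*} [Fintype β]

lemma embedRow_apply_same {i : Fin n} (M : Matrix (Fin (d i)) β ℝ) (k : Fin (d i)) (j : β) :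
    embedRow i M ⟨i, k⟩ j = M k j := by
  simp only [embedRow, Matrix.of_apply, dif_pos rfl]
  congr 1

lemma embedRow_apply_ne {i i' : Fin n} (h : i' ≠ i) (M : Matrix (Fin (d i)) β ℝ)
    (k : Fin (d i')) (j : β) : embedRow i M ⟨i', k⟩ j = 0 := by
  simp only [embedRow, Matrix.of_apply, dif_neg h]

lemma rowBlk_embedRow (i : Fin n) (M : Matrix (Fin (d i)) β ℝ) :
    rowBlk (embedRow i M) i = M := by
  ext k j; exact embedRow_apply_same M k j

lemma embedRow_zero (i : Fin n) : embedRow i (0 : Matrix (Fin (d i)) β ℝ) = 0 := by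
  ext ⟨s, k⟩ j
  by_cases h : s = i
  · subst h; rw [embedRow_apply_same]; rfl
  · rw [embedRow_apply_ne h]; rfl

lemma embedRow_add (i : Fin n) (M N : Matrix (Fin (d i)) β ℝ) :
    embedRow i (M + N) = embedRow i M + embedRow i N := by
  ext ⟨s, k⟩ j
  by_cases h : s = i
  · subst h; simp [embedRow_apply_same, Matrix.add_apply]
  · simp [embedRow_apply_ne h, Matrix.add_apply]

lemma embedRow_smul (i : Fin n) (t : ℝ) (M : Matrix (Fin (d i)) β ℝ) :
    embedRow i (t • M) = t • embedRow i M := by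
  ext ⟨s, k⟩ j
  by_cases h : s = i
  · subst h; simp [embedRow_apply_same, Matrix.smul_apply]
  · simp [embedRow_apply_ne h, Matrix.smul_apply]

lemma embedRow_sub (i : Fin n) (M N : Matrix (Fin (d i)) β ℝ) :
    embedRow i (M - N) = embedRow i M - embedRow i N := by
  ext ⟨s, k⟩ j
  by_cases h : s = i
  · subst h; simp [embedRow_apply_same, Matrix.sub_apply]
  · simp [embedRow_apply_ne h, Matrix.sub_apply]

lemma sum_embedRow_rowBlk (M : Matrix ((i : Fin n) × Fin (d i)) β ℝ) :
    ∑ i, embedRow i (rowBlk M i) = M := by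
  ext ⟨s, k⟩ j
  rw [Matrix.sum_apply]
  rw [Finset.sum_eq_single s]
  · exact embedRow_apply_same _ k j
  · intro i _ hi
    exact embedRow_apply_ne (Ne.symm hi) _ k j
  · intro h; exact absurd (Finset.mem_univ s) h

lemma rowBlk_sum_embedRow (N : ∀ i, Matrix (Fin (d i)) β ℝ) (i : Fin n) :
    rowBlk (∑ k, embedRow k (N k)) i = N i := by
  ext r j
  show (∑ k, embedRow k (N k)) ⟨i, r⟩ j = N i r j
  rw [Matrix.sum_apply]
  rw [Finset.sum_eq_single i]
  · exact embedRow_apply_same _ r j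
  · intro k _ hk
    exact embedRow_apply_ne (Ne.symm hk) _ r j
  · intro h; exact absurd (Finset.mem_univ i) h

lemma frobInner_embedRow (M : Matrix ((i : Fin n) × Fin (d i)) β ℝ) (k : Fin n)
    (N : Matrix (Fin (d k)) β ℝ) :
    frobInner M (embedRow k N) = frobInner (rowBlk M k) N := by
  rw [frobInner_eq_sum, frobInner_eq_sum]
  rw [← Finset.univ_sigma_univ, Finset.sum_sigma]
  rw [Finset.sum_eq_single k]
  · apply Finset.sum_congr rfl
    intro r _
    apply Finset.sum_congr rfl
    intro j _
    rw [embedRow_apply_same]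
    rfl
  · intro i _ hi
    apply Finset.sum_eq_zero
    intro r _
    apply Finset.sum_eq_zero
    intro j _
    rw [embedRow_apply_ne hi]
    ring
  · intro h; exact absurd (Finset.mem_univ k) h

end Blocks

-- quadratic lemma
lemma lin_coeff_zero {b c : ℝ} (hc : 0 ≤ c) (h : ∀ t : ℝ, 0 ≤ b * t + c * t ^ 2) : b = 0 := by
  have hc1 : (0:ℝ) < c + 1 := by linarith
  have h1 := h (-(b / (c + 1)))
  have h2 : b * -(b / (c + 1)) + c * (-(b / (c + 1))) ^ 2 = -(b ^ 2) / (c + 1) ^ 2 := by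
    field_simp
    ring
  rw [h2] at h1
  have h3 : (0:ℝ) < (c + 1) ^ 2 := by positivity
  have h4 := mul_nonneg h1 h3.le
  rw [div_mul_cancel₀ _ (ne_of_gt h3)] at h4
  nlinarith [sq_nonneg b]

section Lap
variable {n : ℕ} (a : Matrix (Fin n) (Fin n) ℝ)

-- scalar Laplacian sum manipulations
lemma lap_quadratic_form (hsym : ∀ i j, a i j = a j i) (x : Fin n → ℝ) :
    2 * ∑ i, x i * (∑ j, a i j * (x i - x j)) = ∑ i, ∑ j, a i j * (x i - x j) ^ 2 := by
  have swap : ∑ i, ∑ j, a i j * (x j * (x j - x i)) = ∑ i, ∑ j, a i j * (x i * (x i - x j)) := by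
    rw [Finset.sum_comm]
    apply Finset.sum_congr rfl; intro i _
    apply Finset.sum_congr rfl; intro j _
    rw [hsym j i]
  have lhs : ∑ i, x i * (∑ j, a i j * (x i - x j)) = ∑ i, ∑ j, a i j * (x i * (x i - x j)) := by
    apply Finset.sum_congr rfl; intro i _
    rw [Finset.mul_sum]
    apply Finset.sum_congr rfl; intro j _
    ring
  rw [lhs]
  rw [two_mul]
  nth_rewrite 2 [← swap]
  rw [← Finset.sum_add_distrib]
  apply Finset.sum_congr rfl; intro i _
  rw [← Finset.sum_add_distrib]
  apply Finset.sum_congr rfl; intro j _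
  ring

lemma lap_ker_scalar (hsym : ∀ i j, a i j = a j i) (hnonneg : ∀ i j, 0 ≤ a i j)
    (hconn : ∀ i j : Fin n, Relation.ReflTransGen (fun u v : Fin n => u ≠ v ∧ 0 < a u v) i j)
    (x : Fin n → ℝ) (hx : ∀ i, ∑ j, a i j * (x i - x j) = 0) :
    ∀ i j, x i = x j := by
  have hq : ∑ i, ∑ j, a i j * (x i - x j) ^ 2 = 0 := by
    rw [← lap_quadratic_form a hsym x]
    rw [Finset.sum_congr rfl (fun i _ => by rw [hx i, mul_zero])]
    simp
  have hterm : ∀ i j, a i j * (x i - x j) ^ 2 = 0 := by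
    intro i j
    have h1 : ∀ i ∈ Finset.univ, (0:ℝ) ≤ ∑ j, a i j * (x i - x j) ^ 2 :=
      fun i _ => Finset.sum_nonneg fun j _ => mul_nonneg (hnonneg i j) (sq_nonneg _)
    have h2 := (Finset.sum_eq_zero_iff_of_nonneg h1).mp hq i (Finset.mem_univ i)
    have h3 : ∀ j ∈ Finset.univ, (0:ℝ) ≤ a i j * (x i - x j) ^ 2 :=
      fun j _ => mul_nonneg (hnonneg i j) (sq_nonneg _)
    exact (Finset.sum_eq_zero_iff_of_nonneg h3).mp h2 j (Finset.mem_univ j)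
  have hadj : ∀ i j, 0 < a i j → x i = x j := by
    intro i j hpos
    have := hterm i j
    have h4 : (x i - x j) ^ 2 = 0 := by
      rcases mul_eq_zero.mp this with h | h
      · exact absurd h (ne_of_gt hpos)
      · exact h
    have := pow_eq_zero_iff (n := 2) (by norm_num) |>.mp h4
    linarith [sub_eq_zero.mp this]
  intro i j
  induction hconn i j with
  | refl => rfl
  | tail _ hstep ih => exact ih.trans (hadj _ _ hstep.2)

-- surjectivity of scalar Laplacian onto zero-sum vectors
lemma lap_surj_scalar (hn : 0 < n) (hsym : ∀ i j, a i j = a j i) (hnonneg : ∀ i j, 0 ≤ a i j)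
    (hconn : ∀ i j : Fin n, Relation.ReflTransGen (fun u v : Fin n => u ≠ v ∧ 0 < a u v) i j)
    (m : Fin n → ℝ) (hm : ∑ i, m i = 0) :
    ∃ z : Fin n → ℝ, ∀ i, ∑ j, a i j * (z i - z j) = m i := by
  classical
  set L : (Fin n → ℝ) →ₗ[ℝ] (Fin n → ℝ) :=
    { toFun := fun x i => ∑ j, a i j * (x i - x j)
      map_add' := by
        intro x y; funext i
        show ∑ j, a i j * ((x i + y i) - (x j + y j))
            = (∑ j, a i j * (x i - x j)) + ∑ j, a i j * (y i - y j)
        rw [← Finset.sum_add_distrib]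
        exact Finset.sum_congr rfl fun j _ => by ring
      map_smul' := by
        intro c x; funext i
        show ∑ j, a i j * (c * x i - c * x j) = c * ∑ j, a i j * (x i - x j)
        rw [Finset.mul_sum]
        exact Finset.sum_congr rfl fun j _ => by ring } with hL
  set φ : (Fin n → ℝ) →ₗ[ℝ] ℝ :=
    { toFun := fun x => ∑ i, x i
      map_add' := by intro x y; simp [Finset.sum_add_distrib]
      map_smul' := by intro c x; simp [Finset.mul_sum] } with hφ
  have hrange_le : LinearMap.range L ≤ LinearMap.ker φ := by
    rintro _ ⟨x, rfl⟩
    show ∑ i, ∑ j, a i j * (x i - x j) = 0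
    have swap : ∑ i, ∑ j, a i j * x j = ∑ i, ∑ j, a i j * x i := by
      rw [Finset.sum_comm]
      apply Finset.sum_congr rfl; intro i _
      apply Finset.sum_congr rfl; intro j _
      rw [hsym j i]
    have expand : ∀ i j, a i j * (x i - x j) = a i j * x i - a i j * x j := fun i j => by ring
    simp_rw [expand, Finset.sum_sub_distrib]
    rw [swap]
    ring
  have i0 : Fin n := ⟨0, hn⟩
  have hker : LinearMap.ker L = Submodule.span ℝ {(fun _ => (1:ℝ) : Fin n → ℝ)} := by
    apply le_antisymm
    · intro x hx
      have hx' : ∀ i, ∑ j, a i j * (x i - x j) = 0 := fun i => congrFun hx i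
      have hconst := lap_ker_scalar a hsym hnonneg hconn x hx'
      rw [Submodule.mem_span_singleton]
      exact ⟨x i0, by funext i; simp [hconst i i0]⟩
    · rw [Submodule.span_le]
      rintro _ rfl
      show (fun i => ∑ j, a i j * ((1:ℝ) - 1)) = 0
      funext i; simp
  have hone_ne : (fun _ => (1:ℝ) : Fin n → ℝ) ≠ 0 := by
    intro h
    have := congrFun h i0
    norm_num at this
  have hkerdim : Module.finrank ℝ (LinearMap.ker L) = 1 := by
    rw [hker]
    exact finrank_span_singleton hone_ne
  have hφsurj : Function.Surjective φ := by
    intro c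
    refine ⟨fun i => if i = i0 then c else 0, ?_⟩
    show ∑ i, (if i = i0 then c else 0) = c
    simp
  have hφker : Module.finrank ℝ (LinearMap.ker φ) = n - 1 := by
    have h1 := LinearMap.finrank_range_add_finrank_ker φ
    rw [LinearMap.range_eq_top.mpr hφsurj] at h1
    simp [Module.finrank_self] at h1
    have hpi : Module.finrank ℝ (Fin n → ℝ) = n := by simp
    omega
  have hLrange : Module.finrank ℝ (LinearMap.range L) = n - 1 := by
    have h1 := LinearMap.finrank_range_add_finrank_ker L
    have hpi : Module.finrank ℝ (Fin n → ℝ) = n := by simp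
    omega
  have heq : LinearMap.range L = LinearMap.ker φ :=
    Submodule.eq_of_le_of_finrank_eq hrange_le (by rw [hLrange, hφker])
  have hmem : m ∈ LinearMap.ker φ := hm
  rw [← heq] at hmem
  obtain ⟨z, hz⟩ := hmem
  exact ⟨z, fun i => congrFun hz i⟩

end Lap


section LapMat
variable {n : ℕ} {α β : Type*} [Fintype α] [Fintype β] (a : Matrix (Fin n) (Fin n) ℝ)

noncomputable def lapF (x : Fin n → Matrix α β ℝ) (i : Fin n) : Matrix α β ℝ :=
  ∑ j, a i j • (x i - x j)

lemma lapF_apply (x : Fin n → Matrix α β ℝ) (i : Fin n) (k : α) (l : β) :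
    lapF a x i k l = ∑ j, a i j * (x i k l - x j k l) := by
  unfold lapF
  rw [Matrix.sum_apply]
  exact Finset.sum_congr rfl fun j _ => by simp [Matrix.smul_apply, Matrix.sub_apply]

lemma lapF_add_smul (x y : Fin n → Matrix α β ℝ) (t : ℝ) (i : Fin n) :
    lapF a (fun j => x j + t • y j) i = lapF a x i + t • lapF a y i := by
  ext k l
  simp only [lapF_apply, Matrix.add_apply, Matrix.smul_apply, smul_eq_mul, Finset.mul_sum,
    ← Finset.sum_add_distrib]
  exact Finset.sum_congr rfl fun j _ => by ring

lemma lapF_sub (x y : Fin n → Matrix α β ℝ) (i : Fin n) :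
    lapF a (fun j => x j - y j) i = lapF a x i - lapF a y i := by
  ext k l
  simp only [lapF_apply, Matrix.sub_apply, Finset.sum_sub_distrib, ← Finset.sum_sub_distrib]
  exact Finset.sum_congr rfl fun j _ => by ring

lemma sum_lapF (hsym : ∀ i j, a i j = a j i) (x : Fin n → Matrix α β ℝ) :
    ∑ i, lapF a x i = 0 := by
  ext k l
  rw [Matrix.sum_apply]
  simp only [lapF_apply]
  have swap : ∑ i, ∑ j, a i j * x j k l = ∑ i, ∑ j, a i j * x i k l := by
    rw [Finset.sum_comm]
    exact Finset.sum_congr rfl fun i _ => Finset.sum_congr rfl fun j _ => by rw [hsym j i]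
  have expand : ∀ i j : Fin n, a i j * (x i k l - x j k l)
      = a i j * x i k l - a i j * x j k l := fun i j => by ring
  simp_rw [expand, Finset.sum_sub_distrib]
  rw [swap]
  simp

lemma frobInner_lapF_right (u : Matrix α β ℝ) (v : Fin n → Matrix α β ℝ) (i : Fin n) :
    frobInner u (lapF a v i) = ∑ j, a i j * (frobInner u (v i) - frobInner u (v j)) := by
  unfold lapF
  rw [frobInner_sum_right]
  exact Finset.sum_congr rfl fun j _ => by rw [frobInner_smul_right, frobInner_sub_right]

lemma lapF_selfadjoint (hsym : ∀ i j, a i j = a j i) (x y : Fin n → Matrix α β ℝ) :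
    ∑ i, frobInner (x i) (lapF a y i) = ∑ i, frobInner (lapF a x i) (y i) := by
  have rhs : ∀ i, frobInner (lapF a x i) (y i)
      = ∑ j, a i j * (frobInner (x i) (y i) - frobInner (x j) (y i)) := by
    intro i
    rw [frobInner_comm, frobInner_lapF_right]
    exact Finset.sum_congr rfl fun j _ => by
      rw [frobInner_comm (y i) (x i), frobInner_comm (y i) (x j)]
  simp_rw [rhs, frobInner_lapF_right, mul_sub, Finset.sum_sub_distrib]
  congr 1
  rw [Finset.sum_comm]
  exact Finset.sum_congr rfl fun i _ => Finset.sum_congr rfl fun j _ => by rw [hsym j i]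

lemma lapF_ker (hsym : ∀ i j, a i j = a j i) (hnonneg : ∀ i j, 0 ≤ a i j)
    (hconn : ∀ i j : Fin n, Relation.ReflTransGen (fun u v : Fin n => u ≠ v ∧ 0 < a u v) i j)
    (R : Fin n → Matrix α β ℝ) (hR : ∀ i, lapF a R i = 0) :
    ∀ i j, R i = R j := by
  intro i j
  ext k l
  refine lap_ker_scalar a hsym hnonneg hconn (fun i => R i k l) ?_ i j
  intro i'
  have := congrFun (congrFun (hR i') k) l
  rw [lapF_apply] at this
  exact this

lemma lapF_surj (hn : 0 < n) (hsym : ∀ i j, a i j = a j i) (hnonneg : ∀ i j, 0 ≤ a i j)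
    (hconn : ∀ i j : Fin n, Relation.ReflTransGen (fun u v : Fin n => u ≠ v ∧ 0 < a u v) i j)
    (M : Fin n → Matrix α β ℝ) (hM : ∑ i, M i = 0) :
    ∃ Z : Fin n → Matrix α β ℝ, ∀ i, lapF a Z i = M i := by
  classical
  have hkl : ∀ kl : α × β, ∃ z : Fin n → ℝ, ∀ i, ∑ j, a i j * (z i - z j) = M i kl.1 kl.2 := by
    intro ⟨k, l⟩
    apply lap_surj_scalar a hn hsym hnonneg hconn
    have := congrFun (congrFun hM k) l
    rw [Matrix.sum_apply] at this
    exact this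
  choose z hz using hkl
  refine ⟨fun i => Matrix.of fun k l => z (k, l) i, ?_⟩
  intro i
  ext k l
  rw [lapF_apply]
  exact hz (k, l) i

end LapMat

section MoreHelpers
variable {α β : Type*} [Fintype α] [Fintype β]

lemma frobInner_neg_left (M N : Matrix α β ℝ) : frobInner (-M) N = -frobInner M N := by
  simp [frobInner_eq_sum, Finset.sum_neg_distrib]

lemma frobSq_add' (M N : Matrix α β ℝ) :
    frobSq (M + N) = frobSq M + 2 * frobInner M N + frobSq N := by
  have := frobSq_add_smul 1 M N
  rw [one_smul] at this
  rw [this]; ring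

lemma stationarity {ι : Type*} [Fintype ι] (M N : ι → Matrix α β ℝ)
    (h : ∀ t : ℝ, ∑ i, frobSq (M i) ≤ ∑ i, frobSq (M i + t • N i)) :
    ∑ i, frobInner (M i) (N i) = 0 := by
  have hsum : ∀ t : ℝ, ∑ i, frobSq (M i + t • N i)
      = ∑ i, frobSq (M i) + (2 * ∑ i, frobInner (M i) (N i)) * t
        + (∑ i, frobSq (N i)) * t ^ 2 := by
    intro t
    simp_rw [frobSq_add_smul, Finset.sum_add_distrib, ← Finset.sum_mul, ← Finset.mul_sum]
  have hq : ∀ t : ℝ, 0 ≤ (2 * ∑ i, frobInner (M i) (N i)) * t + (∑ i, frobSq (N i)) * t ^ 2 := by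
    intro t
    have h1 := h t
    rw [hsum t] at h1
    linarith
  have hc : (0:ℝ) ≤ ∑ i, frobSq (N i) := Finset.sum_nonneg fun i _ => frobSq_nonneg _
  have := lin_coeff_zero hc hq
  linarith

end MoreHelpers

theorem stmt_16 (n q : ℕ) (hn : 0 < n) (rdim mdim pdim : Fin n → ℕ)
    (a : Matrix (Fin n) (Fin n) ℝ)
    (hsym : ∀ i j, a i j = a j i) (hnonneg : ∀ i j, 0 ≤ a i j)
    (hdiag : ∀ i, a i i = 0) (hconn : GraphConnected a)
    (Al : ∀ i, Matrix ((i' : Fin n) × Fin (mdim i')) (Fin (rdim i)) ℝ)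
    (Bv : ∀ i, Matrix (Fin (pdim i)) (Fin q) ℝ)
    (Fv : ∀ i, Matrix (Fin (mdim i)) (Fin q) ℝ)
    (Xl : ∀ i, Matrix ((i' : Fin n) × Fin (rdim i')) (Fin (pdim i)) ℝ)
    (Yv : ∀ i, Matrix (Fin (rdim i)) (Fin q) ℝ)
    (Z : Fin n → Matrix ((i : Fin n) × Fin (rdim i)) (Fin q) ℝ)
    (U W : Fin n → Matrix ((i : Fin n) × Fin (mdim i)) (Fin q) ℝ) :
    (CRRfeas a Bv Xl Yv Z U W ∧
        ∀ Xl' : ∀ i, Matrix ((i' : Fin n) × Fin (rdim i')) (Fin (pdim i)) ℝ,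
          ∀ Yv' : ∀ i, Matrix (Fin (rdim i)) (Fin q) ℝ,
            ∀ Z' : Fin n → Matrix ((i : Fin n) × Fin (rdim i)) (Fin q) ℝ,
              ∀ U' W' : Fin n → Matrix ((i : Fin n) × Fin (mdim i)) (Fin q) ℝ,
                CRRfeas a Bv Xl' Yv' Z' U' W' →
                  CRRobj Al Fv Yv U ≤ CRRobj Al Fv Yv' U') ↔
      (∃ L1 : Fin n → Matrix ((i : Fin n) × Fin (mdim i)) (Fin q) ℝ,
        ∃ L2 : Fin n → Matrix ((i : Fin n) × Fin (rdim i)) (Fin q) ℝ,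
          CRRequil a Al Bv Fv Xl Yv Z U W L1 L2) := by
  classical
  have i0 : Fin n := ⟨0, hn⟩
  set R : Fin n → Matrix ((i : Fin n) × Fin (mdim i)) (Fin q) ℝ :=
    fun i => Al i * Yv i - embedRow i (Fv i) - U i with hR
  have hRi : ∀ i, Al i * Yv i - embedRow i (Fv i) - U i = R i := fun i => rfl
  have hobj : ∀ (Yv' : ∀ i, Matrix (Fin (rdim i)) (Fin q) ℝ)
      (U' : Fin n → Matrix ((i : Fin n) × Fin (mdim i)) (Fin q) ℝ),
      CRRobj Al Fv Yv' U' = ∑ i, frobSq (Al i * Yv' i - embedRow i (Fv i) - U' i) := fun _ _ => rfl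
  constructor
  · rintro ⟨⟨hfeas1, hfeas2⟩, hopt⟩
    have hfeas1' : ∀ i, embedRow i (Yv i) - Xl i * Bv i - lapF a Z i = 0 := hfeas1
    have hfeas2' : ∀ i, U i = lapF a W i := hfeas2
    -- Step A : the residuals are all equal
    have hstatW : ∀ E : Fin n → Matrix ((i : Fin n) × Fin (mdim i)) (Fin q) ℝ,
        ∑ i, frobInner (R i) (lapF a E i) = 0 := by
      intro E
      apply stationarity
      intro t
      have hfeas' : CRRfeas a Bv Xl Yv Z (fun i => U i + (-t) • lapF a E i)
          (fun i => W i + (-t) • E i) := by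
        refine ⟨hfeas1, fun i => ?_⟩
        show U i + (-t) • lapF a E i = lapF a (fun j => W j + (-t) • E j) i
        rw [lapF_add_smul, ← hfeas2' i]
      have hle := hopt Xl Yv Z _ _ hfeas'
      rw [hobj, hobj] at hle
      have e2 : ∀ i, Al i * Yv i - embedRow i (Fv i) - (U i + (-t) • lapF a E i)
          = R i + t • lapF a E i := by
        intro i
        ext k l
        simp only [Matrix.sub_apply, Matrix.add_apply, Matrix.smul_apply, smul_eq_mul, hR]
        ring
      simp only [e2] at hle
      simp only [hRi] at hle
      exact hle
    have hlapR : ∀ i, lapF a R i = 0 := by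
      have h0 : ∑ i, frobSq (lapF a R i) = 0 := by
        simp_rw [frobSq_eq]
        rw [← lapF_selfadjoint a hsym R (lapF a R)]
        exact hstatW (lapF a R)
      intro i
      exact eq_zero_of_frobSq _
        ((Finset.sum_eq_zero_iff_of_nonneg (fun i _ => frobSq_nonneg _)).mp h0 i
          (Finset.mem_univ i))
    have hRconst : ∀ i j, R i = R j := lapF_ker a hsym hnonneg hconn R hlapR
    set Λ1 : Matrix ((i : Fin n) × Fin (mdim i)) (Fin q) ℝ := R i0 with hΛ1
    set Λ2 : Matrix ((i : Fin n) × Fin (rdim i)) (Fin q) ℝ :=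
      ∑ k, embedRow k (-((Al k)ᵀ * Λ1)) with hΛ2
    have hrow : ∀ i, rowBlk Λ2 i = -((Al i)ᵀ * Λ1) := fun i =>
      rowBlk_sum_embedRow (fun k => -((Al k)ᵀ * Λ1)) i
    -- Step C : Λ2 * (Bv i)ᵀ = 0
    have hBv : ∀ i, Λ2 * (Bv i)ᵀ = 0 := by
      intro i
      have hstatX : ∀ G : Matrix ((i' : Fin n) × Fin (rdim i')) (Fin (pdim i)) ℝ,
          frobInner Λ2 (G * Bv i) = 0 := by
        intro G
        set ΔY : ∀ k, Matrix (Fin (rdim k)) (Fin q) ℝ := fun k => rowBlk (G * Bv i) k with hΔY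
        set ΔX : ∀ k, Matrix ((i' : Fin n) × Fin (rdim i')) (Fin (pdim k)) ℝ :=
          Function.update (fun k => (0 : Matrix ((i' : Fin n) × Fin (rdim i')) (Fin (pdim k)) ℝ))
            i G with hΔX
        set M : Fin n → Matrix ((i' : Fin n) × Fin (rdim i')) (Fin q) ℝ :=
          fun k => embedRow k (ΔY k) - ΔX k * Bv k with hM
        have hXBv : ∑ k, ΔX k * Bv k = G * Bv i := by
          rw [Finset.sum_eq_single i]
          · rw [hΔX]; rw [Function.update_self]
          · intro k _ hk
            rw [hΔX]; rw [Function.update_of_ne hk, Matrix.zero_mul]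
          · intro h; exact absurd (Finset.mem_univ i) h
        have hMsum : ∑ k, M k = 0 := by
          rw [hM]
          rw [Finset.sum_sub_distrib]
          rw [show (∑ k, embedRow k (ΔY k)) = G * Bv i from sum_embedRow_rowBlk _, hXBv,
            sub_self]
        obtain ⟨ΔZ, hΔZ⟩ := lapF_surj a hn hsym hnonneg hconn M hMsum
        have hstat : ∑ k, frobInner (R k) (Al k * ΔY k) = 0 := by
          apply stationarity
          intro t
          have hfeas' : CRRfeas a Bv (fun k => Xl k + t • ΔX k) (fun k => Yv k + t • ΔY k)
              (fun k => Z k + t • ΔZ k) U W := by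
            refine ⟨fun k => ?_, hfeas2⟩
            show embedRow k (Yv k + t • ΔY k) - (Xl k + t • ΔX k) * Bv k
                - lapF a (fun j => Z j + t • ΔZ j) k = 0
            rw [embedRow_add, embedRow_smul, Matrix.add_mul, Matrix.smul_mul, lapF_add_smul,
              hΔZ k, hM]
            have h1 := hfeas1' k
            ext r c
            have h1' := congrFun (congrFun h1 r) c
            simp only [Matrix.sub_apply, Matrix.add_apply, Matrix.smul_apply, smul_eq_mul,
              Matrix.zero_apply] at h1' ⊢
            linarith
          have hle := hopt _ _ _ _ _ hfeas'
          rw [hobj, hobj] at hle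
          have e2 : ∀ k, Al k * (Yv k + t • ΔY k) - embedRow k (Fv k) - U k
              = R k + t • (Al k * ΔY k) := by
            intro k
            rw [Matrix.mul_add, Matrix.mul_smul]
            ext r c
            simp only [Matrix.sub_apply, Matrix.add_apply, Matrix.smul_apply, smul_eq_mul, hR]
            ring
          simp only [e2] at hle
          simp only [hRi] at hle
          exact hle
        have hchain : ∀ k, frobInner (R k) (Al k * ΔY k)
            = -frobInner Λ2 (embedRow k (ΔY k)) := by
          intro k
          rw [hRconst k i0, ← hΛ1]
          rw [frobInner_comm, frobInner_mul_left, frobInner_comm]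
          rw [show (Al k)ᵀ * Λ1 = -(rowBlk Λ2 k) from by rw [hrow k]; simp]
          rw [frobInner_neg_left, frobInner_embedRow]
        rw [← show (∑ k, embedRow k (ΔY k)) = G * Bv i from sum_embedRow_rowBlk _]
        rw [frobInner_sum_right]
        have : ∑ k, frobInner Λ2 (embedRow k (ΔY k)) = 0 := by
          have := hstat
          simp only [hchain] at this
          rw [Finset.sum_neg_distrib] at this
          linarith
        exact this
      have := hstatX (Λ2 * (Bv i)ᵀ)
      rw [frobInner_mul_right_trans] at this
      exact eq_zero_of_frobSq _ this
    -- Step D : assemble the equilibrium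
    refine ⟨R, fun _ => Λ2, fun i => ?_⟩
    have hX0 : CRRrhsX Bv (fun _ => Λ2) i = 0 := hBv i
    have hY0 : CRRrhsY Al Fv Yv U (fun _ => Λ2) i = 0 := by
      unfold CRRrhsY
      rw [hRi i, hrow i, hRconst i i0, ← hΛ1]
      simp
    have hU0 : CRRrhsU Al Fv Yv U R i = 0 := by
      unfold CRRrhsU
      rw [hRi i, sub_self]
    have hW0 : CRRrhsW a R i = 0 := by
      unfold CRRrhsW
      exact Finset.sum_eq_zero fun j _ => by rw [hRconst i j, sub_self, smul_zero]
    have hZ0 : CRRrhsZ a (fun _ => Λ2) i = 0 := by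
      unfold CRRrhsZ
      exact Finset.sum_eq_zero fun j _ => by rw [sub_self, smul_zero]
    refine ⟨hX0, hY0, hU0, hW0, hZ0, ?_, ?_⟩
    · unfold CRRrhsL1
      rw [hU0, show (∑ j, a i j • (R i - R j)) = 0 from hW0, ← hfeas2 i]
      simp
    · unfold CRRrhsL2
      rw [hY0, hX0, embedRow_zero, Matrix.zero_mul,
        show (∑ j, a i j • (Λ2 - Λ2)) = 0 from hZ0]
      have h := hfeas1 i
      ext r c
      have h' := congrFun (congrFun h r) c
      simp only [Matrix.sub_apply, Matrix.add_apply, Matrix.zero_apply] at h' ⊢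
      linarith
  · rintro ⟨L1, L2, heq⟩
    have hX0 : ∀ i, L2 i * (Bv i)ᵀ = 0 := fun i => (heq i).1
    have hY0 : ∀ i, -((Al i)ᵀ * (Al i * Yv i - embedRow i (Fv i) - U i)) - rowBlk (L2 i) i = 0 :=
      fun i => (heq i).2.1
    have hU0 : ∀ i, Al i * Yv i - embedRow i (Fv i) - U i - L1 i = 0 := fun i => (heq i).2.2.1
    have hW0 : ∀ i, lapF a L1 i = 0 := fun i => (heq i).2.2.2.1
    have hZ0 : ∀ i, lapF a L2 i = 0 := fun i => (heq i).2.2.2.2.1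
    have hL10 : ∀ i, CRRrhsL1 a Al Fv Yv U W L1 i = 0 := fun i => (heq i).2.2.2.2.2.1
    have hL20 : ∀ i, CRRrhsL2 a Al Bv Fv Xl Yv Z U L2 i = 0 := fun i => (heq i).2.2.2.2.2.2
    have hL1R : ∀ i, L1 i = R i := fun i => (sub_eq_zero.mp (hU0 i)).symm
    have hRconst : ∀ i j, R i = R j := by
      intro i j
      rw [← hL1R i, ← hL1R j]
      exact lapF_ker a hsym hnonneg hconn L1 hW0 i j
    have hL2const : ∀ i j, L2 i = L2 j := lapF_ker a hsym hnonneg hconn L2 hZ0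
    -- feasibility
    have hfeas2 : ∀ i, U i = ∑ j, a i j • (W i - W j) := by
      intro i
      have h := hL10 i
      unfold CRRrhsL1 at h
      rw [show CRRrhsU Al Fv Yv U L1 i = 0 from hU0 i,
        show (∑ j, a i j • (L1 i - L1 j)) = 0 from hW0 i] at h
      have h2 : U i - ∑ j, a i j • (W i - W j) = 0 := by
        ext r c
        have h' := congrFun (congrFun h r) c
        simp only [Matrix.sub_apply, Matrix.add_apply, Matrix.zero_apply] at h' ⊢
        linarith
      exact sub_eq_zero.mp h2
    have hfeas1 : ∀ i, embedRow i (Yv i) - Xl i * Bv i - ∑ j, a i j • (Z i - Z j) = 0 := by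
      intro i
      have h := hL20 i
      unfold CRRrhsL2 at h
      rw [show CRRrhsY Al Fv Yv U L2 i = 0 from hY0 i, embedRow_zero,
        show CRRrhsX Bv L2 i = 0 from hX0 i, Matrix.zero_mul,
        show (∑ j, a i j • (L2 i - L2 j)) = 0 from hZ0 i] at h
      ext r c
      have h' := congrFun (congrFun h r) c
      simp only [Matrix.sub_apply, Matrix.add_apply, Matrix.zero_apply] at h' ⊢
      linarith
    refine ⟨⟨hfeas1, hfeas2⟩, ?_⟩
    -- optimality
    intro Xl' Yv' Z' U' W' ⟨hf1', hf2'⟩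
    set Λ1 : Matrix ((i : Fin n) × Fin (mdim i)) (Fin q) ℝ := R i0 with hΛ1
    set Λ2 : Matrix ((i : Fin n) × Fin (rdim i)) (Fin q) ℝ := L2 i0 with hΛ2
    set D : Fin n → Matrix ((i : Fin n) × Fin (mdim i)) (Fin q) ℝ :=
      fun k => Al k * Yv' k - embedRow k (Fv k) - U' k - R k with hD
    have hDk : ∀ k, D k = Al k * (Yv' k - Yv k) - (U' k - U k) := by
      intro k
      rw [hD, Matrix.mul_sub]
      ext r c
      simp only [Matrix.sub_apply, hR]
      ring
    have hrow : ∀ k, rowBlk Λ2 k = -((Al k)ᵀ * Λ1) := by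
      intro k
      rw [hΛ2, hL2const i0 k]
      have h := hY0 k
      rw [hRi k, hRconst k i0, ← hΛ1] at h
      have := sub_eq_zero.mp h
      rw [← this]
    have hinner : ∑ k, frobInner (R k) (D k) = 0 := by
      have hRk : ∀ k, R k = Λ1 := fun k => hRconst k i0
      have split : ∑ k, frobInner (R k) (D k)
          = ∑ k, frobInner Λ1 (Al k * (Yv' k - Yv k)) - ∑ k, frobInner Λ1 (U' k - U k) := by
        rw [← Finset.sum_sub_distrib]
        apply Finset.sum_congr rfl
        intro k _
        rw [hRk k, hDk k, frobInner_sub_right]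
      rw [split]
      have hU : ∑ k, frobInner Λ1 (U' k - U k) = 0 := by
        rw [← frobInner_sum_right]
        have : ∑ k, (U' k - U k) = 0 := by
          have e : ∀ k, U' k - U k = lapF a W' k - lapF a W k := by
            intro k
            rw [show U' k = lapF a W' k from hf2' k, show U k = lapF a W k from hfeas2 k]
          simp only [e]
          rw [Finset.sum_sub_distrib, sum_lapF a hsym, sum_lapF a hsym, sub_self]
        rw [this, frobInner_zero_right]
      have hY : ∑ k, frobInner Λ1 (Al k * (Yv' k - Yv k)) = 0 := by
        have step1 : ∀ k, frobInner Λ1 (Al k * (Yv' k - Yv k))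
            = -frobInner Λ2 (embedRow k (Yv' k - Yv k)) := by
          intro k
          rw [frobInner_comm, frobInner_mul_left, frobInner_comm]
          rw [show (Al k)ᵀ * Λ1 = -(rowBlk Λ2 k) from by rw [hrow k]; simp]
          rw [frobInner_neg_left, frobInner_embedRow]
        simp only [step1]
        rw [Finset.sum_neg_distrib, neg_eq_zero]
        have step2 : ∀ k, embedRow k (Yv' k - Yv k)
            = (Xl' k - Xl k) * Bv k + lapF a (fun j => Z' j - Z j) k := by
          intro k
          rw [embedRow_sub, Matrix.sub_mul, lapF_sub]
          have h1 : embedRow k (Yv k) - Xl k * Bv k - lapF a Z k = 0 := hfeas1 k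
          have h2 : embedRow k (Yv' k) - Xl' k * Bv k - lapF a Z' k = 0 := hf1' k
          ext r c
          have h1' := congrFun (congrFun h1 r) c
          have h2' := congrFun (congrFun h2 r) c
          simp only [Matrix.sub_apply, Matrix.add_apply, Matrix.zero_apply] at h1' h2' ⊢
          linarith
        simp only [step2, frobInner_add_right]
        rw [Finset.sum_add_distrib]
        have hA : ∑ k, frobInner Λ2 ((Xl' k - Xl k) * Bv k) = 0 := by
          apply Finset.sum_eq_zero
          intro k _
          rw [frobInner_mul_right_trans]
          rw [show Λ2 * (Bv k)ᵀ = 0 from by rw [hΛ2, hL2const i0 k]; exact hX0 k]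
          rw [frobInner_comm, frobInner_zero_right]
        have hB : ∑ k, frobInner Λ2 (lapF a (fun j => Z' j - Z j) k) = 0 := by
          rw [← frobInner_sum_right, sum_lapF a hsym, frobInner_zero_right]
        rw [hA, hB, add_zero]
      rw [hU, hY, sub_zero]
    rw [hobj, hobj]
    have expand : ∀ k, Al k * Yv' k - embedRow k (Fv k) - U' k = R k + D k := by
      intro k
      rw [hD]
      ext r c
      simp only [Matrix.sub_apply, Matrix.add_apply]
      ring
    simp only [expand, frobSq_add']
    rw [Finset.sum_add_distrib, Finset.sum_add_distrib]
    have h2 : ∑ k, 2 * frobInner (R k) (D k) = 0 := by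
      rw [← Finset.mul_sum, hinner, mul_zero]
    have h3 : (0:ℝ) ≤ ∑ k, frobSq (D k) := Finset.sum_nonneg fun k _ => frobSq_nonneg _
    simp only [hRi]
    linarith
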